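/- arXiv:2102.04068 — 3 statements merged into one kernel-verified Lean document; each statement's English description precedes it below -/
import Mathlib

section
/- Let (𝒯, d) be an ℝ-tree and 𝒮 ⊆ 𝒯 a dense subtree (i.e., a dense subset that is itself an ℝ-tree with the induced metric, closed under taking segments). Then every point of 𝒯 \ 𝒮 is an endpoint of 𝒯, i.e., has degree 1 (removing it leaves 𝒯 connected). -/
open Set

/-- `f` parametrizes the geodesic segment from `x` to `y` by arclength on `[0, d(x,y)]`. -/
def IsSegParam {T : Type*} [MetricSpace T] (x y : T) (f : ℝ → T) : Prop :=
  f 0 = x ∧ f (dist x y) = y ∧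
    ∀ s ∈ Set.Icc (0 : ℝ) (dist x y), ∀ t ∈ Set.Icc (0 : ℝ) (dist x y),
      dist (f s) (f t) = |s - t|

/-- The segment joining `x` and `y`: the union of images of arclength parametrizations. -/
def seg {T : Type*} [MetricSpace T] (x y : T) : Set T :=
  {p | ∃ f : ℝ → T, IsSegParam x y f ∧ ∃ t ∈ Set.Icc (0 : ℝ) (dist x y), f t = p}

/-- A metric space is an ℝ-tree: any two points are joined by a unique arclength
parametrized segment, and every injective continuous path between two points has
image equal to that segment. -/
structure IsRTree (T : Type*) [MetricSpace T] : Prop where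
  exists_param : ∀ x y : T, ∃ f : ℝ → T, IsSegParam x y f
  unique_param : ∀ x y : T, ∀ f g : ℝ → T, IsSegParam x y f → IsSegParam x y g →
    Set.EqOn f g (Set.Icc (0 : ℝ) (dist x y))
  inj_path : ∀ x y : T, ∀ q : ℝ → T, Continuous q → Set.InjOn q (Set.Icc (0 : ℝ) 1) →
    q 0 = x → q 1 = y → q '' Set.Icc (0 : ℝ) 1 = seg x y

section Aux

variable {T : Type*} [MetricSpace T]

/-- clamp a real to `[0, D]`. -/
noncomputable def clampTo (D t : ℝ) : ℝ := max 0 (min t D)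

lemma clampTo_mem {D : ℝ} (hD : 0 ≤ D) (t : ℝ) : clampTo D t ∈ Icc 0 D := by
  constructor
  · exact le_max_left _ _
  · exact max_le hD (min_le_right _ _)

lemma clampTo_eq {D t : ℝ} (ht : t ∈ Icc 0 D) : clampTo D t = t := by
  unfold clampTo
  rw [min_eq_left ht.2, max_eq_right ht.1]

lemma continuous_clampTo (D : ℝ) : Continuous (clampTo D) :=
  continuous_const.max ((continuous_id.min continuous_const))

lemma IsSegParam.continuousOn {x y : T} {f : ℝ → T} (hf : IsSegParam x y f) :
    ContinuousOn f (Icc 0 (dist x y)) := by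
  refine (LipschitzOnWith.of_dist_le_mul (K := 1) ?_).continuousOn
  intro s hs t ht
  rw [hf.2.2 s hs t ht]
  simp [Real.dist_eq]

lemma IsSegParam.continuous_clamped {x y : T} {f : ℝ → T} (hf : IsSegParam x y f) :
    Continuous (f ∘ clampTo (dist x y)) :=
  hf.continuousOn.comp_continuous (continuous_clampTo _) (clampTo_mem dist_nonneg)

lemma param_mem_seg {x y : T} {f : ℝ → T} (hf : IsSegParam x y f) {t : ℝ}
    (ht : t ∈ Icc 0 (dist x y)) : f t ∈ seg x y := ⟨f, hf, t, ht, rfl⟩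

lemma left_mem_seg (h : IsRTree T) (x y : T) : x ∈ seg x y := by
  obtain ⟨f, hf⟩ := h.exists_param x y
  have := param_mem_seg hf (t := 0) ⟨le_refl _, dist_nonneg⟩
  rwa [hf.1] at this

lemma right_mem_seg (h : IsRTree T) (x y : T) : y ∈ seg x y := by
  obtain ⟨f, hf⟩ := h.exists_param x y
  have := param_mem_seg hf (t := dist x y) ⟨dist_nonneg, le_refl _⟩
  rwa [hf.2.1] at this

lemma seg_eq_image (h : IsRTree T) {x y : T} {f : ℝ → T} (hf : IsSegParam x y f) :
    seg x y = f '' Icc 0 (dist x y) := by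
  ext p
  constructor
  · rintro ⟨g, hg, t, ht, rfl⟩
    exact ⟨t, ht, (h.unique_param x y g f hg hf ht).symm⟩
  · rintro ⟨t, ht, rfl⟩
    exact ⟨f, hf, t, ht, rfl⟩

lemma dist_of_mem_seg {x y z : T} (hz : z ∈ seg x y) :
    dist x z + dist z y = dist x y := by
  obtain ⟨f, hf, t, ht, rfl⟩ := hz
  have hD : (0:ℝ) ≤ dist x y := dist_nonneg
  have h0 : (0:ℝ) ∈ Icc 0 (dist x y) := ⟨le_refl _, hD⟩
  have hDm : dist x y ∈ Icc (0:ℝ) (dist x y) := ⟨hD, le_refl _⟩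
  have h1 : dist x (f t) = t := by
    rw [← hf.1, hf.2.2 0 h0 t ht, abs_of_nonpos (by linarith [ht.1]), neg_sub, sub_zero]
  have h2 : dist (f t) y = dist x y - t := by
    have h3 := hf.2.2 t ht _ hDm
    rw [hf.2.1] at h3
    rw [h3, abs_of_nonpos (by linarith [ht.2]), neg_sub]
  rw [h1, h2]; ring

lemma mem_seg_of_dist (h : IsRTree T) {x y z : T} (hd : dist x z + dist z y = dist x y) :
    z ∈ seg x y := by
  obtain ⟨f, hf⟩ := h.exists_param x z
  obtain ⟨g, hg⟩ := h.exists_param z y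
  set A := dist x z with hA
  set B := dist z y with hB
  have hA0 : (0:ℝ) ≤ A := dist_nonneg
  have hB0 : (0:ℝ) ≤ B := dist_nonneg
  have hD : dist x y = A + B := hd.symm
  set h' : ℝ → T := fun t => if t ≤ A then f t else g (t - A) with hh'
  have hend : h' (dist x y) = y := by
    rw [hD]
    by_cases hB' : B = 0
    · have hz : z = y := by
        have : dist z y = 0 := by rw [← hB, hB']
        exact dist_eq_zero.mp this
      simp only [hh', hB', add_zero, if_pos (le_refl A)]
      rw [hf.2.1, hz]
    · have : ¬ (A + B ≤ A) := by
        intro hc; exact hB' (le_antisymm (by linarith) hB0)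
      simp only [hh', if_neg this, add_sub_cancel_left]
      exact hg.2.1
  have key : ∀ s ∈ Icc (0:ℝ) (A + B), ∀ t ∈ Icc (0:ℝ) (A + B), s ≤ t →
      dist (h' s) (h' t) = t - s := by
    intro s hs t ht hst
    by_cases hsA : s ≤ A
    · by_cases htA : t ≤ A
      · simp only [hh', if_pos hsA, if_pos htA]
        rw [hf.2.2 s ⟨hs.1, hsA⟩ t ⟨ht.1, htA⟩, abs_of_nonpos (by linarith), neg_sub]
      · push_neg at htA
        simp only [hh', if_pos hsA, if_neg (not_le.mpr htA)]
        have hsI : s ∈ Icc (0:ℝ) A := ⟨hs.1, hsA⟩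
        have htI : t - A ∈ Icc (0:ℝ) B := ⟨by linarith, by linarith [ht.2]⟩
        have hAI : A ∈ Icc (0:ℝ) A := ⟨hA0, le_refl _⟩
        have h0B : (0:ℝ) ∈ Icc (0:ℝ) B := ⟨le_refl _, hB0⟩
        have hBI : B ∈ Icc (0:ℝ) B := ⟨hB0, le_refl _⟩
        have h0A : (0:ℝ) ∈ Icc (0:ℝ) A := ⟨le_refl _, hA0⟩
        have d1 : dist (f s) z = A - s := by
          rw [← hf.2.1, hf.2.2 s hsI A hAI, abs_of_nonpos (by linarith), neg_sub]
        have d2 : dist z (g (t - A)) = t - A := by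
          rw [← hg.1, hg.2.2 0 h0B (t - A) htI, abs_of_nonpos (by linarith), neg_sub, sub_zero]
        have d3 : dist x (f s) = s := by
          rw [← hf.1, hf.2.2 0 h0A s hsI, abs_of_nonpos (by linarith [hs.1]), neg_sub, sub_zero]
        have d4 : dist (g (t - A)) y = B - (t - A) := by
          rw [← hg.2.1, hg.2.2 (t - A) htI B hBI, abs_of_nonpos (by linarith [ht.2]), neg_sub]
        have hub : dist (f s) (g (t - A)) ≤ t - s := by
          calc dist (f s) (g (t - A)) ≤ dist (f s) z + dist z (g (t - A)) := dist_triangle _ _ _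
          _ = t - s := by rw [d1, d2]; ring
        have hlb : t - s ≤ dist (f s) (g (t - A)) := by
          have t1 : dist x y ≤ dist x (f s) + dist (f s) (g (t - A)) + dist (g (t - A)) y :=
            dist_triangle4 _ _ _ _
          rw [hD, d3, d4] at t1
          linarith
        linarith
    · push_neg at hsA
      have htA : ¬ (t ≤ A) := not_le.mpr (by linarith)
      simp only [hh', if_neg (not_le.mpr hsA), if_neg htA]
      have hsI : s - A ∈ Icc (0:ℝ) B := ⟨by linarith, by linarith [hs.2]⟩
      have htI : t - A ∈ Icc (0:ℝ) B := ⟨by linarith, by linarith [ht.2]⟩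
      rw [hg.2.2 _ hsI _ htI, abs_of_nonpos (by linarith), neg_sub]
      ring
  refine ⟨h', ⟨?_, hend, ?_⟩, A, ⟨hA0, by rw [hD]; linarith⟩, ?_⟩
  · simp only [hh', if_pos hA0]
    exact hf.1
  · intro s hs t ht
    rw [hD] at hs ht
    rcases le_total s t with hst | hst
    · rw [key s hs t ht hst, abs_of_nonpos (by linarith), neg_sub]
    · rw [dist_comm, key t ht s hs hst, abs_of_nonneg (by linarith)]
  · simp only [hh', if_pos (le_refl A)]
    exact hf.2.1

lemma mem_seg_iff_dist (h : IsRTree T) {x y z : T} :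
    z ∈ seg x y ↔ dist x z + dist z y = dist x y :=
  ⟨dist_of_mem_seg, mem_seg_of_dist h⟩

lemma mem_seg_comm (h : IsRTree T) {x y z : T} (hz : z ∈ seg x y) : z ∈ seg y x := by
  rw [mem_seg_iff_dist h] at hz ⊢
  rw [dist_comm y z, dist_comm z x, dist_comm y x, add_comm]
  exact hz

end Aux

section Tree

variable {T : Type*} [MetricSpace T]

lemma seg_subset_union (h : IsRTree T) (p q r : T) :
    seg p r ⊆ seg p q ∪ seg q r := by
  obtain ⟨f, hf⟩ := h.exists_param p q
  obtain ⟨g, hg⟩ := h.exists_param q r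
  set A := dist p q with hA
  set B := dist q r with hB
  have hA0 : (0:ℝ) ≤ A := dist_nonneg
  have hB0 : (0:ℝ) ≤ B := dist_nonneg
  set fc : ℝ → T := f ∘ clampTo A with hfc
  set gc : ℝ → T := g ∘ clampTo B with hgc
  have hfc_eq : ∀ t ∈ Icc (0:ℝ) A, fc t = f t := fun t ht => by
    simp only [hfc, Function.comp_apply, clampTo_eq ht]
  have hgc_eq : ∀ t ∈ Icc (0:ℝ) B, gc t = g t := fun t ht => by
    simp only [hgc, Function.comp_apply, clampTo_eq ht]
  set σ : Set ℝ := {s | s ∈ Icc (0:ℝ) (min A B) ∧ fc (A - s) = gc s} with hσ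
  have hmemf : ∀ s ∈ Icc (0:ℝ) (min A B), A - s ∈ Icc (0:ℝ) A := by
    intro s hs
    exact ⟨by linarith [hs.2, min_le_left A B], by linarith [hs.1]⟩
  have hmemg : ∀ s ∈ Icc (0:ℝ) (min A B), s ∈ Icc (0:ℝ) B := by
    intro s hs
    exact ⟨hs.1, le_trans hs.2 (min_le_right A B)⟩
  have h0σ : (0:ℝ) ∈ σ := by
    refine ⟨⟨le_refl _, le_min hA0 hB0⟩, ?_⟩
    rw [hfc_eq _ (hmemf 0 ⟨le_refl _, le_min hA0 hB0⟩),
        hgc_eq _ (hmemg 0 ⟨le_refl _, le_min hA0 hB0⟩), sub_zero, hf.2.1, hg.1]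
  have hbdd : BddAbove σ := ⟨min A B, fun s hs => hs.1.2⟩
  have hclosed : IsClosed σ := by
    have : σ = Icc (0:ℝ) (min A B) ∩ {s | fc (A - s) = gc s} := rfl
    rw [this]
    refine isClosed_Icc.inter ?_
    have hcont : Continuous (fun s : ℝ => (fc (A - s), gc s)) := by
      refine Continuous.prodMk ?_ ?_
      · exact hf.continuous_clamped.comp (continuous_const.sub continuous_id)
      · exact hg.continuous_clamped
    exact isClosed_diagonal.preimage hcont
  set c := sSup σ with hc
  have hcσ : c ∈ σ := hclosed.csSup_mem ⟨0, h0σ⟩ hbdd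
  have hc0 : (0:ℝ) ≤ c := le_csSup hbdd h0σ
  have hcA : c ≤ A := le_trans hcσ.1.2 (min_le_left A B)
  have hcB : c ≤ B := le_trans hcσ.1.2 (min_le_right A B)
  have hm : f (A - c) = g c := by
    have := hcσ.2
    rwa [hfc_eq _ (hmemf c hcσ.1), hgc_eq _ (hmemg c hcσ.1)] at this
  set L := (A - c) + (B - c) with hL
  have hL0 : 0 ≤ L := by simp only [hL]; linarith
  rcases eq_or_lt_of_le hL0 with hLz | hLpos
  · -- degenerate: p = r
    have hAc : A = c := by linarith [(by linarith : A - c ≤ 0)]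
    have hBc : B = c := by linarith [(by linarith : B - c ≤ 0)]
    have hpr : p = r := by
      have h1 : f 0 = f (A - c) := by rw [show A - c = 0 by linarith]
      have h2 : g c = g B := by rw [hBc]
      rw [← hf.1, h1, hm, h2, hg.2.1]
    intro w hw
    left
    have hd := dist_of_mem_seg hw
    rw [← hpr, dist_self] at hd
    have h1 : dist p w = 0 := by
      have := dist_nonneg (x := p) (y := w)
      have := dist_nonneg (x := w) (y := p)
      linarith
    have : w = p := (dist_eq_zero.mp h1).symm
    rw [this]
    exact left_mem_seg h p q
  · -- nondegenerate: build injective path p → m → r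
    set h' : ℝ → T := fun t => if t ≤ A - c then fc t else gc (t - (A - c) + c) with hh'
    have hjunction : fc (A - c) = gc c := by
      rw [hfc_eq _ (hmemf c hcσ.1), hgc_eq _ (hmemg c hcσ.1)]
      exact hm
    have hcont : Continuous h' := by
      refine Continuous.if_le ?_ ?_ continuous_id continuous_const ?_
      · exact hf.continuous_clamped
      · exact hg.continuous_clamped.comp ((continuous_id.sub continuous_const).add continuous_const)
      · intro t ht
        rw [ht]
        rw [hjunction]
        norm_num
    -- values of h' on [0, L]
    have hval1 : ∀ t ∈ Icc (0:ℝ) L, t ≤ A - c → h' t = f t ∧ t ∈ Icc (0:ℝ) A := by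
      intro t ht htc
      have htI : t ∈ Icc (0:ℝ) A := ⟨ht.1, by linarith⟩
      exact ⟨by simp only [hh', if_pos htc]; exact hfc_eq t htI, htI⟩
    have hval2 : ∀ t ∈ Icc (0:ℝ) L, ¬ (t ≤ A - c) →
        h' t = g (t - (A - c) + c) ∧ (t - (A - c) + c) ∈ Icc (0:ℝ) B ∧ c < t - (A - c) + c := by
      intro t ht htc
      push_neg at htc
      have h1 : c < t - (A - c) + c := by linarith
      have htI : (t - (A - c) + c) ∈ Icc (0:ℝ) B := ⟨by linarith, by
        have := ht.2
        simp only [hL] at this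
        linarith⟩
      exact ⟨by simp only [hh', if_neg (not_le.mpr htc)]; exact hgc_eq _ htI, htI, h1⟩
    -- injectivity of h' on [0, L]
    have hinj : ∀ s ∈ Icc (0:ℝ) L, ∀ t ∈ Icc (0:ℝ) L, h' s = h' t → s = t := by
      have cross : ∀ s ∈ Icc (0:ℝ) L, ∀ t ∈ Icc (0:ℝ) L,
          s ≤ A - c → ¬ (t ≤ A - c) → h' s ≠ h' t := by
        intro s hs t ht hsc htc heq
        obtain ⟨he1, hsI⟩ := hval1 s hs hsc
        obtain ⟨he2, htI, htc'⟩ := hval2 t ht htc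
        rw [he1, he2] at heq
        set t' := t - (A - c) + c with ht'
        have hAI : A ∈ Icc (0:ℝ) A := ⟨hA0, le_refl _⟩
        have h0B : (0:ℝ) ∈ Icc (0:ℝ) B := ⟨le_refl _, hB0⟩
        have d1 : dist (f s) q = A - s := by
          rw [← hf.2.1, hf.2.2 s hsI A hAI, abs_of_nonpos (by linarith [hsI.2]), neg_sub]
        have d2 : dist q (g t') = t' := by
          rw [← hg.1, hg.2.2 0 h0B t' htI, abs_of_nonpos (by linarith [htI.1]), neg_sub, sub_zero]
        have hts : t' = A - s := by
          rw [heq] at d1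
          rw [dist_comm] at d2
          rw [d1] at d2
          linarith
        have ht'σ : t' ∈ σ := by
          refine ⟨⟨htI.1, le_min (by linarith [hs.1]) htI.2⟩, ?_⟩
          have hmf : A - t' ∈ Icc (0:ℝ) A := ⟨by linarith [hs.1], by linarith [htI.1]⟩
          rw [hfc_eq _ hmf, hgc_eq _ htI, show A - t' = s by linarith]
          exact heq
        have : t' ≤ c := le_csSup hbdd ht'σ
        linarith
      intro s hs t ht heq
      by_cases hsc : s ≤ A - c <;> by_cases htc : t ≤ A - c
      · obtain ⟨he1, hsI⟩ := hval1 s hs hsc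
        obtain ⟨he2, htI⟩ := hval1 t ht htc
        rw [he1, he2] at heq
        have := hf.2.2 s hsI t htI
        rw [heq, dist_self] at this
        have := abs_eq_zero.mp this.symm
        linarith [this]
      · exact absurd heq (cross s hs t ht hsc htc)
      · exact absurd heq.symm (cross t ht s hs htc hsc)
      · obtain ⟨he1, hsI, _⟩ := hval2 s hs hsc
        obtain ⟨he2, htI, _⟩ := hval2 t ht htc
        rw [he1, he2] at heq
        have := hg.2.2 _ hsI _ htI
        rw [heq, dist_self] at this
        have := abs_eq_zero.mp this.symm
        linarith [sub_eq_zero.mp this]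
    -- the reparametrized path
    set q' : ℝ → T := fun u => h' (u * L) with hq'
    have hmemL : ∀ u ∈ Icc (0:ℝ) 1, u * L ∈ Icc (0:ℝ) L := by
      intro u hu
      exact ⟨mul_nonneg hu.1 hL0, by nlinarith [hu.2]⟩
    have hq'cont : Continuous q' := hcont.comp (continuous_id.mul continuous_const)
    have hq'inj : Set.InjOn q' (Icc (0:ℝ) 1) := by
      intro u hu v hv heq
      have := hinj _ (hmemL u hu) _ (hmemL v hv) heq
      exact mul_right_cancel₀ (ne_of_gt hLpos) this
    have hq'0 : q' 0 = p := by
      have h0L : (0:ℝ) ∈ Icc (0:ℝ) L := ⟨le_refl _, hL0⟩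
      obtain ⟨he, _⟩ := hval1 0 h0L (by linarith)
      simp only [hq', zero_mul]
      rw [he, hf.1]
    have hq'1 : q' 1 = r := by
      simp only [hq', one_mul]
      have hLL : L ∈ Icc (0:ℝ) L := ⟨hL0, le_refl _⟩
      by_cases hLc : L ≤ A - c
      · obtain ⟨he, _⟩ := hval1 L hLL hLc
        have hBc : B = c := by simp only [hL] at hLc; linarith
        have : L = A - c := by simp only [hL]; rw [← hBc]; linarith [hBc]
        rw [he, this, hm]
        rw [show g c = g B by rw [hBc]]
        exact hg.2.1
      · obtain ⟨he, _, _⟩ := hval2 L hLL hLc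
        rw [he]
        have : L - (A - c) + c = B := by simp only [hL]; ring
        rw [this, hg.2.1]
    have himg := h.inj_path p r q' hq'cont hq'inj hq'0 hq'1
    intro w hw
    rw [← himg] at hw
    obtain ⟨u, hu, rfl⟩ := hw
    have hsL := hmemL u hu
    by_cases hsc : u * L ≤ A - c
    · obtain ⟨he, hsI⟩ := hval1 _ hsL hsc
      left
      simp only [hq']
      rw [he]
      exact param_mem_seg hf hsI
    · obtain ⟨he, hsI, _⟩ := hval2 _ hsL hsc
      right
      simp only [hq']
      rw [he]
      exact param_mem_seg hg hsI

end Tree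

section Main

variable {T : Type*} [MetricSpace T]

/-- A point outside a dense subtree cannot lie strictly inside any segment. -/
lemma endpoint_of_notMem (h : IsRTree T) {S : Set T} (hdense : Dense S)
    (hsub : ∀ x ∈ S, ∀ y ∈ S, seg x y ⊆ S) {z : T} (hz : z ∉ S) :
    ∀ x y : T, z ∈ seg x y → z = x ∨ z = y := by
  -- key claim: if a ∈ S and z is strictly inside seg a y', contradiction
  have claim : ∀ a y' : T, a ∈ S → z ∈ seg a y' → z ≠ y' → False := by
    intro a y' ha hzs hzy
    have hB : 0 < dist z y' := dist_pos.mpr hzy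
    set δ := dist z y' / 2 with hδ
    have hδ0 : 0 < δ := by positivity
    obtain ⟨g, hg⟩ := h.exists_param z y'
    set w := g δ with hw
    have hδI : δ ∈ Icc (0:ℝ) (dist z y') := ⟨le_of_lt hδ0, by linarith⟩
    have h0I : (0:ℝ) ∈ Icc (0:ℝ) (dist z y') := ⟨le_refl _, dist_nonneg⟩
    have hDI : dist z y' ∈ Icc (0:ℝ) (dist z y') := ⟨dist_nonneg, le_refl _⟩
    have dzw : dist z w = δ := by
      rw [hw, ← hg.1, hg.2.2 0 h0I δ hδI, abs_of_nonpos (by linarith), neg_sub, sub_zero]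
    have dwy : dist w y' = dist z y' - δ := by
      have h3 := hg.2.2 δ hδI _ hDI
      rw [hg.2.1] at h3
      rw [hw, h3, abs_of_nonpos (by linarith), neg_sub]
    obtain ⟨b, hb, hbw⟩ := hdense.exists_dist_lt w (half_pos hδ0)
    rcases seg_subset_union h a b y' hzs with hzab | hzby
    · exact hz (hsub a ha b hb hzab)
    · have hd := dist_of_mem_seg hzby
      have t1 : dist b y' ≤ dist b w + dist w y' := dist_triangle _ _ _
      have t2 : dist z w ≤ dist z b + dist b w := dist_triangle _ _ _
      have hbw' : dist b w < δ / 2 := by rw [dist_comm]; exact hbw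
      have t1' : dist b y' ≤ dist b w + (dist z y' - δ) := by rw [← dwy]; exact t1
      have t2' : δ ≤ dist z b + dist b w := by rw [← dzw]; exact t2
      have hcomm : dist b z = dist z b := dist_comm b z
      linarith
  intro x y hzxy
  by_contra hcon
  push_neg at hcon
  obtain ⟨hzx, hzy⟩ := hcon
  have : Nonempty T := ⟨z⟩
  obtain ⟨a, ha⟩ := hdense.nonempty
  rcases seg_subset_union h x a y hzxy with h1 | h1
  · exact claim a x ha (mem_seg_comm h h1) hzx
  · exact claim a y ha h1 hzy

theorem dense_subtree_complement_endpoints' {T : Type*} [MetricSpace T]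
    (h : IsRTree T) (S : Set T) (hdense : Dense S)
    (hsub : ∀ x ∈ S, ∀ y ∈ S, seg x y ⊆ S) :
    ∀ z : T, z ∉ S → IsConnected ({z}ᶜ : Set T) := by
  intro z hz
  have : Nonempty T := ⟨z⟩
  obtain ⟨s0, hs0⟩ := hdense.nonempty
  have hs0z : s0 ∈ ({z}ᶜ : Set T) := by
    simp only [mem_compl_iff, mem_singleton_iff]
    rintro rfl
    exact hz hs0
  refine ⟨⟨s0, hs0z⟩, ?_⟩
  apply isPreconnected_of_forall_pair
  intro x hx y hy
  refine ⟨seg x y, ?_, left_mem_seg h x y, right_mem_seg h x y, ?_⟩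
  · intro w hw
    simp only [mem_compl_iff, mem_singleton_iff]
    rintro rfl
    simp only [mem_compl_iff, mem_singleton_iff] at hx hy
    rcases endpoint_of_notMem h hdense hsub hz x y hw with h1 | h1
    · exact hx h1.symm
    · exact hy h1.symm
  · obtain ⟨f, hf⟩ := h.exists_param x y
    rw [seg_eq_image h hf]
    exact isPreconnected_Icc.image f hf.continuousOn

end Main

/-- If `S` is a dense subtree of an ℝ-tree `T`, then every point of `T \ S` is an
endpoint of `T`: removing it leaves the space connected. -/
theorem dense_subtree_complement_endpoints {T : Type*} [MetricSpace T]
    (h : IsRTree T) (S : Set T) (hdense : Dense S)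
    (hsub : ∀ x ∈ S, ∀ y ∈ S, seg x y ⊆ S) :
    ∀ z : T, z ∉ S → IsConnected ({z}ᶜ : Set T) := by
  exact dense_subtree_complement_endpoints' h S hdense hsub
end

section
/- Let W be a countable family of continuous functions π : (−∞, σ_π] → ℝ (each with starting time σ_π ∈ ℝ) that is coalescing: for any π, π' ∈ W, if π(s) = π'(s) for some s ≤ σ_π ∧ σ_{π'} then π(r) = π'(r) for all r ≤ s. For (t, π), (s, π') with t ≤ σ_π, s ≤ σ_{π'}, assume the coalescence time τ(π,π') := sup{r ≤ σ_π ∧ σ_{π'} : π(r) = π'(r)} is finite for every pair. Then d((t,π), (s,π')) := (t + s) − 2(τ(π,π') ∧ t ∧ s) defines a pseudometric on the set {(t,π) : π ∈ W, t ≤ σ_π}; in particular it satisfies the triangle inequality. -/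
open Set

variable {ι : Type*}

/-- The set of points of the forest associated to a family of backward paths
`π i : (−∞, σ i] → ℝ`: pairs `(i, t)` with `t ≤ σ i`. -/
def CoalPoints (σ : ι → ℝ) : Type _ := {p : ι × ℝ // p.2 ≤ σ p.1}

/-- The ancestral distance between `(i,t)` and `(j,s)`:
`(t + s) − 2 (τ i j ⊓ t ⊓ s)`. -/
noncomputable def ancestralDist (σ : ι → ℝ) (τ : ι → ι → ℝ)
    (p q : CoalPoints σ) : ℝ :=
  p.1.2 + q.1.2 - 2 * min (τ p.1.1 q.1.1) (min p.1.2 q.1.2)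

/-- For a countable coalescing family of continuous backward paths with finite pairwise
coalescence times, the ancestral distance is a pseudometric: it is non-negative,
vanishes on the diagonal, is symmetric and satisfies the triangle inequality. -/
theorem ancestralDist_pseudometric {ι : Type*} [Countable ι]
    (σ : ι → ℝ) (π : ι → ℝ → ℝ) (τ : ι → ι → ℝ)
    (hcont : ∀ i, ContinuousOn (π i) (Set.Iic (σ i)))
    (hcoal : ∀ i j : ι, ∀ s ≤ min (σ i) (σ j), π i s = π j s →
      ∀ r ≤ s, π i r = π j r)
    (hτ : ∀ i j : ι, IsGreatest {r : ℝ | r ≤ min (σ i) (σ j) ∧ π i r = π j r} (τ i j)) :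
    (∀ p q : CoalPoints σ, 0 ≤ ancestralDist σ τ p q) ∧
    (∀ p : CoalPoints σ, ancestralDist σ τ p p = 0) ∧
    (∀ p q : CoalPoints σ, ancestralDist σ τ p q = ancestralDist σ τ q p) ∧
    (∀ p q r : CoalPoints σ,
      ancestralDist σ τ p r ≤ ancestralDist σ τ p q + ancestralDist σ τ q r) := by
  -- symmetry of τ
  have hτsymm : ∀ i j, τ i j = τ j i := by
    intro i j
    have h1 := hτ i j
    have h2 := hτ j i
    apply le_antisymm
    · exact h2.2 ⟨by simpa [min_comm] using (h1.1).1, (h1.1).2.symm⟩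
    · exact h1.2 ⟨by simpa [min_comm] using (h2.1).1, (h2.1).2.symm⟩
  -- τ i i = σ i
  have hτii : ∀ i, τ i i = σ i := by
    intro i
    have h := hτ i i
    exact le_antisymm (by simpa using h.1.1) (h.2 ⟨by simp, rfl⟩)
  -- ultrametric-type inequality
  have hultra : ∀ i j k, min (τ i j) (τ j k) ≤ τ i k := by
    intro i j k
    set m := min (τ i j) (τ j k) with hm
    have hij := hτ i j
    have hjk := hτ j k
    have h1 : π i m = π j m :=
      hcoal i j (τ i j) hij.1.1 hij.1.2 m (min_le_left _ _)
    have h2 : π j m = π k m :=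
      hcoal j k (τ j k) hjk.1.1 hjk.1.2 m (min_le_right _ _)
    refine (hτ i k).2 ⟨le_min ?_ ?_, h1.trans h2⟩
    · exact le_trans (min_le_left _ _) (le_trans hij.1.1 (min_le_left _ _))
    · exact le_trans (min_le_right _ _) (le_trans hjk.1.1 (min_le_right _ _))
  refine ⟨?_, ?_, ?_, ?_⟩
  · rintro ⟨⟨i, t⟩, hp⟩ ⟨⟨j, s⟩, hq⟩
    simp only [ancestralDist]
    have : min (τ i j) (min t s) ≤ min t s := min_le_right _ _
    have h2 : min t s ≤ (t + s) / 2 := by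
      rcases min_le_iff.mpr (Or.inl (le_refl t)) with _
      cases le_total t s with
      | inl h => rw [min_eq_left h]; linarith
      | inr h => rw [min_eq_right h]; linarith
    nlinarith [this, h2]
  · rintro ⟨⟨i, t⟩, hp⟩
    simp only [ancestralDist]
    have : min (τ i i) (min t t) = t := by
      rw [min_self, hτii, min_eq_right hp]
    rw [this]; ring
  · rintro ⟨⟨i, t⟩, hp⟩ ⟨⟨j, s⟩, hq⟩
    simp only [ancestralDist]
    rw [hτsymm, min_comm t s]; ring
  · rintro ⟨⟨i, t⟩, hp⟩ ⟨⟨j, s⟩, hq⟩ ⟨⟨k, u⟩, hr⟩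
    simp only [ancestralDist]
    have key : min (τ i j) (min t s) + min (τ j k) (min s u)
        ≤ s + min (τ i k) (min t u) := by
      set a := min (τ i j) (min t s) with ha
      set b := min (τ j k) (min s u) with hb
      cases le_total a b with
      | inl hab =>
        have h1 : a ≤ min (τ i k) (min t u) := by
          refine le_min (le_trans (le_min (min_le_left _ _)
            (hab.trans (min_le_left _ _))) (hultra i j k)) (le_min ?_ ?_)
          · exact le_trans (min_le_right _ _) (min_le_left _ _)
          · exact hab.trans (le_trans (min_le_right _ _) (min_le_right _ _))
        have h2 : b ≤ s := le_trans (min_le_right _ _) (min_le_left _ _)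
        linarith
      | inr hab =>
        have h1 : b ≤ min (τ i k) (min t u) := by
          refine le_min (le_trans (le_min (hab.trans (min_le_left _ _))
            (min_le_left _ _)) (hultra i j k)) (le_min ?_ ?_)
          · exact hab.trans (le_trans (min_le_right _ _) (min_le_left _ _))
          · exact le_trans (min_le_right _ _) (min_le_right _ _)
        have h2 : a ≤ s := le_trans (min_le_right _ _) (min_le_right _ _)
        linarith
    linarith
end

section
/- In the setting of a coalescing family of paths with the ancestral distance d((t,π),(s,π')) = (t+s) − 2τ_{t,s}, the distance is an ℝ-tree pseudometric, i.e., it satisfies the four-point condition: for all points 𝔷₁, 𝔷₂, 𝔷₃, 𝔷₄, one has d(𝔷₁,𝔷₂) + d(𝔷₃,𝔷₄) ≤ max( d(𝔷₁,𝔷₃) + d(𝔷₂,𝔷₄), d(𝔷₁,𝔷₄) + d(𝔷₂,𝔷₃) ). -/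
open Set

variable {ι : Type*}

private lemma min_resolve' (x y z : ℝ) (hz : min x y ≤ z) :
    (x ≤ y ∧ x ≤ z) ∨ (y ≤ x ∧ y ≤ z) := by
  rcases le_total x y with h|h
  · exact Or.inl ⟨h, by rwa [min_eq_left h] at hz⟩
  · exact Or.inr ⟨h, by rwa [min_eq_right h] at hz⟩

private lemma ultra_core' (a b c d e f : ℝ) (h1 : min b d ≤ a) (h2 : min c e ≤ a)
    (h3 : min b c ≤ f) (h4 : min d e ≤ f) : min (b + e) (c + d) ≤ a + f := by
  rcases min_resolve' _ _ _ h1 with ⟨h1a, h1b⟩|⟨h1a, h1b⟩ <;>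
  rcases min_resolve' _ _ _ h2 with ⟨h2a, h2b⟩|⟨h2a, h2b⟩ <;>
  rcases min_resolve' _ _ _ h3 with ⟨h3a, h3b⟩|⟨h3a, h3b⟩ <;>
  rcases min_resolve' _ _ _ h4 with ⟨h4a, h4b⟩|⟨h4a, h4b⟩ <;>
  refine min_le_iff.2 ?_ <;>
  first
    | exact Or.inl (by linarith)
    | exact Or.inr (by linarith)

/-- The ancestral distance of a coalescing family of backward paths satisfies the
four-point condition (0-hyperbolicity), i.e. it is an ℝ-tree pseudometric. -/
theorem ancestralDist_fourPoint {ι : Type*} [Countable ι]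
    (σ : ι → ℝ) (π : ι → ℝ → ℝ) (τ : ι → ι → ℝ)
    (hcont : ∀ i, ContinuousOn (π i) (Set.Iic (σ i)))
    (hcoal : ∀ i j : ι, ∀ s ≤ min (σ i) (σ j), π i s = π j s →
      ∀ r ≤ s, π i r = π j r)
    (hτ : ∀ i j : ι, IsGreatest {r : ℝ | r ≤ min (σ i) (σ j) ∧ π i r = π j r} (τ i j)) :
    ∀ p₁ p₂ p₃ p₄ : CoalPoints σ,
      ancestralDist σ τ p₁ p₂ + ancestralDist σ τ p₃ p₄ ≤
        max (ancestralDist σ τ p₁ p₃ + ancestralDist σ τ p₂ p₄)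
            (ancestralDist σ τ p₁ p₄ + ancestralDist σ τ p₂ p₃) := by
  -- symmetry of τ
  have hτsymm : ∀ i j : ι, τ i j = τ j i := by
    intro i j
    refine (hτ i j).unique ?_
    have h := hτ j i
    constructor
    · exact ⟨h.1.1.trans (by rw [min_comm]), h.1.2.symm⟩
    · intro r hr
      exact h.2 ⟨hr.1.trans (by rw [min_comm]), hr.2.symm⟩
  -- triangle inequality for τ
  have htri : ∀ i j k : ι, min (τ i j) (τ j k) ≤ τ i k := by
    intro i j k
    set r := min (τ i j) (τ j k) with hr
    have hij := (hτ i j).1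
    have hjk := (hτ j k).1
    have h1 : π i r = π j r :=
      hcoal i j (τ i j) hij.1 hij.2 r (min_le_left _ _)
    have h2 : π j r = π k r :=
      hcoal j k (τ j k) hjk.1 hjk.2 r (min_le_right _ _)
    refine (hτ i k).2 ⟨le_min ?_ ?_, h1.trans h2⟩
    · exact (min_le_left _ _).trans (hij.1.trans (min_le_left _ _))
    · exact (min_le_right _ _).trans (hjk.1.trans (min_le_right _ _))
  -- the "meet height" function
  set m : CoalPoints σ → CoalPoints σ → ℝ :=
    fun p q => min (τ p.1.1 q.1.1) (min p.1.2 q.1.2) with hm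
  have hmsymm : ∀ p q, m p q = m q p := by
    intro p q
    simp only [hm, hτsymm p.1.1 q.1.1, min_comm p.1.2 q.1.2]
  have hmultra : ∀ p q r, min (m p r) (m r q) ≤ m p q := by
    intro p q r
    refine le_min ?_ (le_min ?_ ?_)
    · exact le_trans (min_le_min (min_le_left _ _) (min_le_left _ _))
        (htri p.1.1 r.1.1 q.1.1)
    · exact (min_le_left _ _).trans ((min_le_right _ _).trans (min_le_left _ _))
    · exact (min_le_right _ _).trans ((min_le_right _ _).trans (min_le_right _ _))
  have hd : ∀ p q, ancestralDist σ τ p q = p.1.2 + q.1.2 - 2 * m p q :=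
    fun p q => rfl
  intro p₁ p₂ p₃ p₄
  have h1 : min (m p₁ p₃) (m p₂ p₃) ≤ m p₁ p₂ := by
    have := hmultra p₁ p₂ p₃; rwa [hmsymm p₃ p₂] at this
  have h2 : min (m p₁ p₄) (m p₂ p₄) ≤ m p₁ p₂ := by
    have := hmultra p₁ p₂ p₄; rwa [hmsymm p₄ p₂] at this
  have h3 : min (m p₁ p₃) (m p₁ p₄) ≤ m p₃ p₄ := by
    have := hmultra p₃ p₄ p₁; rwa [hmsymm p₃ p₁] at this
  have h4 : min (m p₂ p₃) (m p₂ p₄) ≤ m p₃ p₄ := by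
    have := hmultra p₃ p₄ p₂; rwa [hmsymm p₃ p₂] at this
  have key := ultra_core' (m p₁ p₂) (m p₁ p₃) (m p₁ p₄) (m p₂ p₃) (m p₂ p₄)
    (m p₃ p₄) h1 h2 h3 h4
  rw [le_max_iff]
  rcases min_le_iff.1 key with h|h
  · left
    rw [hd, hd, hd, hd]; linarith
  · right
    rw [hd, hd, hd, hd]; linarith
end
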